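/- Let Λ₄ = a·yz·∂₂∧∂₃ + a·xz·∂₃∧∂₁ + (b·xy + z²)·∂₁∧∂₂ with a,b real, 2a + b ≠ 0. If b/a = β/α in lowest terms with α, β positive integers, then the function C = (xy + z²/(2a+b))^α · z^β is a Casimir function of Λ₄, i.e. {C, f} = 0 for every polynomial f. -/
import Mathlib


open MvPolynomial

/-- The Poisson bracket `{f,g} = Λ(df,dg)` of the bivector on ℝ³ with components
`A23 = Λ²³`, `A31 = Λ³¹`, `A12 = Λ¹²` (coordinates `x = X 0`, `y = X 1`, `z = X 2`). -/
noncomputable def pbr (A23 A31 A12 f g : MvPolynomial (Fin 3) ℝ) : MvPolynomial (Fin 3) ℝ :=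
  A23 * (pderiv 1 f * pderiv 2 g - pderiv 2 f * pderiv 1 g)
  + A31 * (pderiv 2 f * pderiv 0 g - pderiv 0 f * pderiv 2 g)
  + A12 * (pderiv 0 f * pderiv 1 g - pderiv 1 f * pderiv 0 g)

/-- For `Λ₄ = a·yz·∂₂∧∂₃ + a·xz·∂₃∧∂₁ + (b·xy + z²)·∂₁∧∂₂` with `2a+b ≠ 0` and
`b/a = β/α` in lowest terms (α, β positive integers), the function
`C = (xy + z²/(2a+b))^α · z^β` is a Casimir: it Poisson-commutes with everything. -/
theorem stmt5 (a b : ℝ) (ha : a ≠ 0) (hab : 2 * a + b ≠ 0)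
    (α β : ℕ) (hα : 0 < α) (hβ : 0 < β) (hcop : Nat.Coprime α β)
    (hratio : b * (α : ℝ) = a * (β : ℝ)) :
    ∀ f : MvPolynomial (Fin 3) ℝ,
      pbr (C a * (X 1 * X 2)) (C a * (X 0 * X 2)) (C b * (X 0 * X 1) + X 2 ^ 2)
        ((X 0 * X 1 + C (2*a+b)⁻¹ * X 2 ^ 2) ^ α * X 2 ^ β) f = 0 := by
  obtain ⟨α', rfl⟩ : ∃ k, α = k + 1 := ⟨α - 1, (Nat.succ_pred_eq_of_pos hα).symm⟩
  obtain ⟨β', rfl⟩ : ∃ k, β = k + 1 := ⟨β - 1, (Nat.succ_pred_eq_of_pos hβ).symm⟩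
  intro f
  have hc : (C ((2*a+b)⁻¹) : MvPolynomial (Fin 3) ℝ) * C (2*a+b) = 1 := by
    rw [← C_mul, inv_mul_cancel₀ hab, C_1]
  have hr : (C b : MvPolynomial (Fin 3) ℝ) * ((α'+1 : ℕ) : MvPolynomial (Fin 3) ℝ)
      = C a * ((β'+1 : ℕ) : MvPolynomial (Fin 3) ℝ) := by
    rw [← map_natCast (C : ℝ →+* MvPolynomial (Fin 3) ℝ),
        ← map_natCast (C : ℝ →+* MvPolynomial (Fin 3) ℝ), ← C_mul, ← C_mul, hratio]
  simp only [pbr, pderiv_mul, Derivation.leibniz_pow, map_add, pderiv_C, pderiv_X_self,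
    Nat.add_sub_cancel, nsmul_eq_mul, pderiv_X, Pi.single_apply, smul_eq_mul]
  norm_num [Fin.ext_iff]
  push_cast
  push_cast at hr
  have hsum : (C (2*a+b) : MvPolynomial (Fin 3) ℝ) = 2 * C a + C b := by
    rw [map_add, map_mul, map_ofNat]
  linear_combination (((pderiv 0 f) * X 0 - (pderiv 1 f) * X 1) * X 2 ^ (β'+1)
      * (X 0 * X 1 + C (2*a+b)⁻¹ * X 2 ^ 2) ^ α') *
    (-(X 0 * X 1 + C (2*a+b)⁻¹ * X 2 ^ 2) * hr
      + (((α' : ℕ) : MvPolynomial (Fin 3) ℝ) + 1) * X 2 ^ 2 * hc)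
    + ((pderiv 1 f) * X 1 - (pderiv 0 f) * X 0) * X 2 ^ β' * X 2 ^ 3 * C (2*a+b)⁻¹
      * (((α' : ℕ) : MvPolynomial (Fin 3) ℝ) + 1)
      * (X 0 * X 1 + C (2*a+b)⁻¹ * X 2 ^ 2) ^ α' * hsum
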